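/- Let Ω ⊂ ℝ^N be a measurable set of finite positive Lebesgue measure, p > 2, p' = p/(p−1), T : L^{p'}(Ω) → L^{p}(Ω) a bounded linear operator, and h : ℝ → ℝ a continuous function with |h(t)| ≤ a(1 + |t|^{1/(p−1)}) for all t and some a > 0; set H(t) = ∫₀ᵗ h(s) ds and Ψ(w) = ∫_Ω H(w) dx − (1/2) ∫_Ω w·Tw dx. Assume there exist C > 0 and C̃ ≥ 0 such that H(t) − (1/2) h(t) t ≥ C |t|^{p/(p−1)} − C̃ for all t ∈ ℝ. If a sequence {wₙ} ⊂ L^{p'}(Ω) satisfies Ψ(wₙ) → c ∈ ℝ and sup_{‖η‖_{L^{p'}} ≤ 1} |∫_Ω (h(wₙ) − T wₙ) η dx| → 0, then {wₙ} is bounded in L^{p'}(Ω). -/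

import Mathlib

open MeasureTheory

theorem aux_bound (q C K t : ℝ) (hq : 1 < q) (hC : 0 < C) (ht : 0 ≤ t)
    (hle : C * t ^ q ≤ K + t / 2) :
    t ≤ max 1 (max ((1 / C) ^ (1 / (q - 1))) (2 * K)) := by
  by_contra hcon
  push_neg at hcon
  have h1 : 1 < t := lt_of_le_of_lt (le_max_left _ _) hcon
  have h2 : (1 / C) ^ (1 / (q - 1)) < t :=
    lt_of_le_of_lt ((le_max_left _ _).trans (le_max_right _ _)) hcon
  have h3 : 2 * K < t := lt_of_le_of_lt ((le_max_right _ _).trans (le_max_right _ _)) hcon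
  have hq1 : 0 < q - 1 := by linarith
  have htpos : 0 < t := by linarith
  have hrpow : (1 / C) ≤ t ^ (q - 1) := by
    calc (1 / C) = ((1 / C) ^ (1 / (q - 1))) ^ (q - 1) := by
          rw [← Real.rpow_mul (by positivity), one_div (q-1),
            inv_mul_cancel₀ (ne_of_gt hq1), Real.rpow_one]
      _ ≤ t ^ (q - 1) := Real.rpow_le_rpow (Real.rpow_nonneg (by positivity) _) h2.le hq1.le
  have ht_q : t ^ q = t ^ (q - 1) * t := by
    rw [← Real.rpow_add_one (ne_of_gt htpos)]
    ring_nf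
  have : t ≤ C * t ^ q := by
    rw [ht_q]
    calc t = C * (1 / C) * t := by field_simp
      _ ≤ C * t ^ (q - 1) * t := by
          have := mul_le_mul_of_nonneg_left hrpow hC.le
          nlinarith
      _ = C * (t ^ (q - 1) * t) := by ring
  linarith

theorem stmt_12 (N : ℕ) (Ω : Set (Fin N → ℝ)) (hΩmeas : MeasurableSet Ω)
    (hΩpos : 0 < volume Ω) (hΩfin : volume Ω < ⊤)
    (p : ℝ) (hp : 2 < p)
    [Fact (1 ≤ ENNReal.ofReal (p / (p - 1)))] [Fact (1 ≤ ENNReal.ofReal p)]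
    (T : Lp ℝ (ENNReal.ofReal (p / (p - 1))) (volume.restrict Ω) →L[ℝ] Lp ℝ (ENNReal.ofReal p) (volume.restrict Ω))
    (h : ℝ → ℝ) (hcont : Continuous h)
    (a : ℝ) (ha : 0 < a) (hgrowth : ∀ t : ℝ, |h t| ≤ a * (1 + |t| ^ (1 / (p - 1))))
    (Ψ : Lp ℝ (ENNReal.ofReal (p / (p - 1))) (volume.restrict Ω) → ℝ)
    (hΨ : ∀ w : Lp ℝ (ENNReal.ofReal (p / (p - 1))) (volume.restrict Ω),
      Ψ w = (∫ x, (∫ s in (0:ℝ)..(w x), h s) ∂(volume.restrict Ω)) - (1 / 2) * ∫ x, w x * T w x ∂(volume.restrict Ω))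
    (C Ctil : ℝ) (hC : 0 < C) (hCtil : 0 ≤ Ctil)
    (hlower : ∀ t : ℝ,
      C * |t| ^ (p / (p - 1)) - Ctil ≤ (∫ s in (0:ℝ)..t, h s) - (1 / 2) * h t * t)
    (w : ℕ → Lp ℝ (ENNReal.ofReal (p / (p - 1))) (volume.restrict Ω)) (c : ℝ)
    (hPS1 : Filter.Tendsto (fun n => Ψ (w n)) Filter.atTop (nhds c))
    (hPS2 : ∀ ε : ℝ, 0 < ε → ∃ n₀ : ℕ, ∀ n ≥ n₀,
      ∀ η : Lp ℝ (ENNReal.ofReal (p / (p - 1))) (volume.restrict Ω), ‖η‖ ≤ 1 →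
        |∫ x, (h (w n x) - T (w n) x) * η x ∂(volume.restrict Ω)| ≤ ε) :
    ∃ B : ℝ, ∀ n : ℕ, ‖w n‖ ≤ B := by
  haveI : IsFiniteMeasure (volume.restrict Ω) := ⟨by rwa [Measure.restrict_apply_univ]⟩
  have hp0 : (0:ℝ) < p := by linarith
  have hp1 : (0:ℝ) < p - 1 := by linarith
  have hq1 : 1 < p / (p - 1) := by rw [lt_div_iff₀ hp1]; linarith
  have hq0 : 0 < p / (p - 1) := by linarith
  have hq_sub : p / (p - 1) - 1 = 1 / (p - 1) := by
    field_simp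
    ring
  have hqE_ne0 : ENNReal.ofReal (p / (p - 1)) ≠ 0 := by
    simp only [ne_eq, ENNReal.ofReal_eq_zero, not_le]; linarith
  have hqE_ne_top : ENNReal.ofReal (p / (p - 1)) ≠ ⊤ := ENNReal.ofReal_ne_top
  have hqE_toReal : (ENNReal.ofReal (p / (p - 1))).toReal = (p / (p - 1)) := ENNReal.toReal_ofReal hq0.le
  -- rpow algebra
  have hrp : ∀ t : ℝ, |t| ^ ((p / (p - 1)) - 1) * |t| = |t| ^ (p / (p - 1)) := by
    intro t
    rcases eq_or_ne t 0 with h0 | h0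
    · simp [h0, Real.zero_rpow (show (p / (p - 1)) ≠ 0 by linarith),
        Real.zero_rpow (show (p / (p - 1)) - 1 ≠ 0 by linarith)]
    · rw [← Real.rpow_add_one (abs_ne_zero.mpr h0), sub_add_cancel]
  -- growth rewritten
  have hgrowth' : ∀ t : ℝ, |h t| ≤ a * (1 + |t| ^ ((p / (p - 1)) - 1)) := by
    intro t; rw [hq_sub]; exact hgrowth t
  -- pointwise bounds
  have habs_bound : ∀ t : ℝ, |h t * t| ≤ a * (|t| + |t| ^ (p / (p - 1))) := by
    intro t
    rw [abs_mul]
    calc |h t| * |t| ≤ (a * (1 + |t| ^ ((p / (p - 1)) - 1))) * |t| :=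
          mul_le_mul_of_nonneg_right (hgrowth' t) (abs_nonneg t)
      _ = a * (|t| + |t| ^ ((p / (p - 1)) - 1) * |t|) := by ring
      _ = a * (|t| + |t| ^ (p / (p - 1))) := by rw [hrp t]
  have hHbound : ∀ t : ℝ, |∫ s in (0:ℝ)..t, h s| ≤ a * (|t| + |t| ^ (p / (p - 1))) := by
    intro t
    have key : ∀ x ∈ Set.uIoc (0:ℝ) t, ‖h x‖ ≤ a * (1 + |t| ^ ((p / (p - 1)) - 1)) := by
      intro x hx
      have hxle : |x| ≤ |t| := by
        rcases le_total 0 t with h' | h'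
        · rw [Set.uIoc_of_le h'] at hx
          rw [abs_of_pos hx.1, abs_of_nonneg h']; exact hx.2
        · rw [Set.uIoc_of_ge h'] at hx
          rw [abs_of_nonpos hx.2, abs_of_nonpos h']; linarith [hx.1]
      calc ‖h x‖ = |h x| := Real.norm_eq_abs _
        _ ≤ a * (1 + |x| ^ ((p / (p - 1)) - 1)) := hgrowth' x
        _ ≤ a * (1 + |t| ^ ((p / (p - 1)) - 1)) := by
            have := Real.rpow_le_rpow (abs_nonneg x) hxle (by linarith : (0:ℝ) ≤ (p / (p - 1)) - 1)
            nlinarith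
    have hb := intervalIntegral.norm_integral_le_of_norm_le_const key
    rw [Real.norm_eq_abs, sub_zero] at hb
    calc |∫ s in (0:ℝ)..t, h s| ≤ a * (1 + |t| ^ ((p / (p - 1)) - 1)) * |t| := hb
      _ = a * (|t| + |t| ^ ((p / (p - 1)) - 1) * |t|) := by ring
      _ = a * (|t| + |t| ^ (p / (p - 1))) := by rw [hrp t]
  -- measurability / integrability per n
  have aesm : ∀ n, AEStronglyMeasurable (⇑(w n)) (volume.restrict Ω) :=
    fun n => Lp.aestronglyMeasurable (w n)
  have int_w : ∀ n, Integrable (⇑(w n)) (volume.restrict Ω) := fun n =>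
    (Lp.memLp (w n)).integrable Fact.out
  have int_rpow : ∀ n, Integrable (fun x => |w n x| ^ (p / (p - 1))) (volume.restrict Ω) := by
    intro n
    have := (Lp.memLp (w n)).integrable_norm_rpow hqE_ne0 hqE_ne_top
    simpa [hqE_toReal, Real.norm_eq_abs] using this
  have gint : ∀ n, Integrable (fun x => a * (|w n x| + |w n x| ^ (p / (p - 1)))) (volume.restrict Ω) :=
    fun n => (((int_w n).abs).add (int_rpow n)).const_mul a
  have Hcont : Continuous (fun t : ℝ => ∫ s in (0:ℝ)..t, h s) :=
    intervalIntegral.continuous_primitive (fun a b => hcont.intervalIntegrable a b) 0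
  have intH : ∀ n, Integrable (fun x => ∫ s in (0:ℝ)..(w n x), h s) (volume.restrict Ω) := by
    intro n
    refine (gint n).mono' (Hcont.comp_aestronglyMeasurable (aesm n)) ?_
    exact ae_of_all _ fun x => by simpa [Real.norm_eq_abs] using hHbound (w n x)
  have inthw : ∀ n, Integrable (fun x => h (w n x) * w n x) (volume.restrict Ω) := by
    intro n
    refine (gint n).mono' ((hcont.comp_aestronglyMeasurable (aesm n)).mul (aesm n)) ?_
    exact ae_of_all _ fun x => by rw [Real.norm_eq_abs]; exact habs_bound (w n x)
  -- conjugate exponents, integrability of w * Tw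
  have hsum : (p / (p - 1))⁻¹ + p⁻¹ = 1 := by
    field_simp
    ring
  have hconj1 : 1 / (1 : ENNReal) = 1 / ENNReal.ofReal (p / (p - 1)) + 1 / ENNReal.ofReal p := by
    rw [one_div, one_div, one_div, inv_one, ← ENNReal.ofReal_inv_of_pos hq0,
      ← ENNReal.ofReal_inv_of_pos hp0, ← ENNReal.ofReal_add (by positivity) (by positivity),
      hsum, ENNReal.ofReal_one]
  have intwTw : ∀ n, Integrable (fun x => w n x * T (w n) x) (volume.restrict Ω) := by
    intro n
    have hmul : MemLp (⇑(w n) • ⇑(T (w n))) 1 (volume.restrict Ω) :=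
      MemLp.smul (Lp.memLp (T (w n))) (Lp.memLp (w n)) (hpqr := ⟨by simpa only [one_div] using hconj1.symm⟩)
    have := memLp_one_iff_integrable.mp hmul
    simpa [Pi.smul_apply, smul_eq_mul, Pi.mul_def] using this
  have intTww : ∀ n, Integrable (fun x => T (w n) x * w n x) (volume.restrict Ω) := by
    intro n
    simpa [mul_comm] using intwTw n
  -- norm formula
  have hnorm : ∀ n, ∫ x, |w n x| ^ (p / (p - 1)) ∂(volume.restrict Ω) = ‖w n‖ ^ (p / (p - 1)) := by
    intro n
    have h1 := (Lp.memLp (w n)).eLpNorm_eq_integral_rpow_norm hqE_ne0 hqE_ne_top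
    have hXnn : 0 ≤ ∫ x, |w n x| ^ (p / (p - 1)) ∂(volume.restrict Ω) :=
      integral_nonneg fun x => by positivity
    have h2 : ‖w n‖ = (∫ x, |w n x| ^ (p / (p - 1)) ∂(volume.restrict Ω)) ^ (p / (p - 1))⁻¹ := by
      rw [Lp.norm_def, h1, ENNReal.toReal_ofReal (by positivity)]
      simp only [hqE_toReal, Real.norm_eq_abs]
    rw [h2, Real.rpow_inv_rpow hXnn (by linarith : (p / (p - 1)) ≠ 0)]
  -- set up constants
  obtain ⟨n₀, hn₀⟩ := hPS2 1 one_pos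
  obtain ⟨n₁, hn₁⟩ := Metric.tendsto_atTop.mp hPS1 1 one_pos
  set m : ℝ := (volume.restrict Ω Set.univ).toReal with hm
  set K : ℝ := c + 1 + m * Ctil with hK
  set B₁ : ℝ := max 1 (max ((1 / C) ^ (1 / ((p / (p - 1)) - 1))) (2 * K)) with hB₁
  have main : ∀ n, n₀ ≤ n → n₁ ≤ n → ‖w n‖ ≤ B₁ := by
    intro n hn0 hn1
    set P : ℝ := ∫ x, (h (w n x) - T (w n) x) * (w n x) ∂(volume.restrict Ω) with hPdef
    have hPsplit : P = (∫ x, h (w n x) * w n x ∂(volume.restrict Ω))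
        - ∫ x, w n x * T (w n) x ∂(volume.restrict Ω) := by
      have heq : (fun x => (h (w n x) - T (w n) x) * (w n x))
          = (fun x => h (w n x) * w n x - w n x * T (w n) x) := by
        funext x; ring
      rw [hPdef, heq, integral_sub (inthw n) (intwTw n)]
    have hPle : |P| ≤ ‖w n‖ := by
      rcases eq_or_ne (w n) 0 with hz | hz
      · have hae : ⇑(w n) =ᵐ[volume.restrict Ω] 0 := by
          rw [hz]; exact Lp.coeFn_zero _ _ _
        have hP0 : P = 0 := by
          rw [hPdef]
          refine integral_eq_zero_of_ae ?_
          filter_upwards [hae] with x hx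
          simp [hx]
        simp [hP0, norm_nonneg]
      · have hnz : ‖w n‖ ≠ 0 := norm_ne_zero_iff.mpr hz
        have hpos : 0 < ‖w n‖ := lt_of_le_of_ne (norm_nonneg _) (Ne.symm hnz)
        set η := ‖w n‖⁻¹ • w n with hη
        have hnormη : ‖η‖ ≤ 1 := by
          rw [hη, norm_smul, norm_inv, norm_norm, inv_mul_cancel₀ hnz]
        have hb := hn₀ n hn0 η hnormη
        have hcoe : ⇑η =ᵐ[volume.restrict Ω] fun x => ‖w n‖⁻¹ * w n x := by
          filter_upwards [Lp.coeFn_smul (‖w n‖⁻¹) (w n)] with x hx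
          rw [hη, hx]; simp [smul_eq_mul]
        have heq : ∫ x, (h (w n x) - T (w n) x) * η x ∂(volume.restrict Ω) = ‖w n‖⁻¹ * P := by
          calc ∫ x, (h (w n x) - T (w n) x) * η x ∂(volume.restrict Ω)
              = ∫ x, ‖w n‖⁻¹ * ((h (w n x) - T (w n) x) * w n x) ∂(volume.restrict Ω) := by
                refine integral_congr_ae ?_
                filter_upwards [hcoe] with x hx
                rw [hx]; ring
            _ = ‖w n‖⁻¹ * P := by rw [integral_const_mul, hPdef]
        rw [heq, abs_mul, abs_inv, abs_norm] at hb
        calc |P| = ‖w n‖ * (‖w n‖⁻¹ * |P|) := by field_simp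
          _ ≤ ‖w n‖ * 1 := mul_le_mul_of_nonneg_left hb (norm_nonneg _)
          _ = ‖w n‖ := mul_one _
    have intlow : Integrable (fun x => C * |w n x| ^ (p / (p - 1)) - Ctil) (volume.restrict Ω) :=
      ((int_rpow n).const_mul C).sub (integrable_const Ctil)
    have intup : Integrable
        (fun x => (∫ s in (0:ℝ)..(w n x), h s) - 1 / 2 * h (w n x) * (w n x))
        (volume.restrict Ω) := by
      have heq : (fun x => (∫ s in (0:ℝ)..(w n x), h s) - 1 / 2 * h (w n x) * (w n x))
          = (fun x => (∫ s in (0:ℝ)..(w n x), h s) - 1 / 2 * (h (w n x) * (w n x))) := by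
        funext x; ring
      rw [heq]
      exact (intH n).sub ((inthw n).const_mul _)
    have mono := integral_mono intlow intup (fun x => hlower (w n x))
    have hLHS : ∫ x, (C * |w n x| ^ (p / (p - 1)) - Ctil) ∂(volume.restrict Ω)
        = C * ‖w n‖ ^ (p / (p - 1)) - m * Ctil := by
      rw [integral_sub ((int_rpow n).const_mul C) (integrable_const Ctil),
        integral_const_mul, hnorm n, integral_const, smul_eq_mul]
      rfl
    have hRHS : ∫ x, ((∫ s in (0:ℝ)..(w n x), h s) - 1 / 2 * h (w n x) * (w n x)) ∂(volume.restrict Ω)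
        = (∫ x, (∫ s in (0:ℝ)..(w n x), h s) ∂(volume.restrict Ω))
          - 1 / 2 * ∫ x, h (w n x) * w n x ∂(volume.restrict Ω) := by
      have heq : (fun x => (∫ s in (0:ℝ)..(w n x), h s) - 1 / 2 * h (w n x) * (w n x))
          = (fun x => (∫ s in (0:ℝ)..(w n x), h s) - 1 / 2 * (h (w n x) * (w n x))) := by
        funext x; ring
      rw [heq, integral_sub (intH n) ((inthw n).const_mul _), integral_const_mul]
    rw [hLHS, hRHS] at mono
    have hψ := hΨ (w n)
    have hψle : Ψ (w n) ≤ c + 1 := by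
      have hd := hn₁ n hn1
      rw [Real.dist_eq] at hd
      have := abs_lt.mp hd
      linarith [this.2]
    have hPge : -‖w n‖ ≤ P := (abs_le.mp hPle).1
    have final : C * ‖w n‖ ^ (p / (p - 1)) ≤ K + ‖w n‖ / 2 := by
      rw [hK]
      linarith [mono, hψ, hPsplit, hψle, hPge]
    exact aux_bound (p / (p - 1)) C K ‖w n‖ hq1 hC (norm_nonneg _) final
  refine ⟨max B₁ (∑ i ∈ Finset.range (max n₀ n₁), ‖w i‖), fun n => ?_⟩
  rcases le_or_gt (max n₀ n₁) n with hn | hn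
  · exact le_trans
      (main n (le_trans (le_max_left _ _) hn) (le_trans (le_max_right _ _) hn))
      (le_max_left _ _)
  · refine le_trans ?_ (le_max_right _ _)
    exact Finset.single_le_sum (fun i _ => norm_nonneg (w i)) (Finset.mem_range.mpr hn)
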